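/- arXiv:2202.02649 — 7 statements merged into one kernel-verified Lean document; each statement's English description precedes it below -/
import Mathlib

section
/- (Lemma: free parameters of two-layer GLNs, uniqueness) Let Γ̄ ⊆ {1,…,C}^H be the set of global contexts γ for which at most one coordinate h has γ_h ≠ 1. If two weight settings (w⁽¹⁾, w⁽²⁾) and (v⁽¹⁾, v⁽²⁾) of a two-layer GLN induce families of predictors β and β′ that agree on all γ ∈ Γ̄, then β_γ = β′_γ for every γ ∈ {1,…,C}^H. In other words, the restriction of the predictor family to Γ̄ uniquely determines all C^H predictors. -/
open Finset

noncomputable section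

/-- **Free parameters of two-layer GLNs (uniqueness).** If two weight settings of a
two-layer GLN induce predictor families agreeing on all contexts with at most one
coordinate different from the distinguished first context, then they agree on all
`C^H` contexts. -/
theorem gln_free_parameters_uniqueness
    (H C D : ℕ) [NeZero C]
    (w1 v1 : Fin H → Fin C → EuclideanSpace ℝ (Fin D)) (w2 v2 : Fin H → ℝ)
    (β β' : (Fin H → Fin C) → EuclideanSpace ℝ (Fin D))
    (hβ : ∀ γ, β γ = ∑ h, w2 h • w1 h (γ h))
    (hβ' : ∀ γ, β' γ = ∑ h, v2 h • v1 h (γ h))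
    (hagree : ∀ γ : Fin H → Fin C,
      (Finset.univ.filter (fun h => γ h ≠ 0)).card ≤ 1 → β γ = β' γ) :
    ∀ γ : Fin H → Fin C, β γ = β' γ := by
  intro γ
  have key : ∀ (u1 : Fin H → Fin C → EuclideanSpace ℝ (Fin D)) (u2 : Fin H → ℝ),
      ∑ h, u2 h • u1 h (γ h)
        = (∑ h, u2 h • u1 h 0)
          + ∑ h, ((∑ h', u2 h' • u1 h' (Function.update (fun _ => (0:Fin C)) h (γ h) h'))
                  - ∑ h', u2 h' • u1 h' 0) := by
    intro u1 u2
    have hterm : ∀ h : Fin H,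
        (∑ h', u2 h' • u1 h' (Function.update (fun _ => (0:Fin C)) h (γ h) h'))
          - ∑ h', u2 h' • u1 h' 0
        = u2 h • u1 h (γ h) - u2 h • u1 h 0 := by
      intro h
      rw [← Finset.sum_sub_distrib, Finset.sum_eq_single h]
      · simp
      · intro b _ hb; simp [Function.update_of_ne hb]
      · simp
    simp only [hterm, Finset.sum_sub_distrib]
    abel
  have hcard : ∀ h : Fin H,
      (Finset.univ.filter (fun h' =>
        Function.update (fun _ => (0:Fin C)) h (γ h) h' ≠ 0)).card ≤ 1 := by
    intro h
    have hsub : (Finset.univ.filter (fun h' =>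
        Function.update (fun _ => (0:Fin C)) h (γ h) h' ≠ 0)) ⊆ {h} := by
      intro x hx
      simp only [Finset.mem_filter] at hx
      simp only [Finset.mem_singleton]
      by_contra hxh
      exact hx.2 (by simp [Function.update_of_ne hxh])
    calc _ ≤ ({h} : Finset (Fin H)).card := Finset.card_le_card hsub
      _ = 1 := rfl
  have h0 : β (fun _ => 0) = β' (fun _ => 0) := hagree _ (by simp)
  have e0 : (∑ h, w2 h • w1 h 0) = ∑ h, v2 h • v1 h 0 := by
    rw [hβ, hβ'] at h0; exact h0
  rw [hβ, hβ', key w1 w2, key v1 v2, e0]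
  congr 1
  apply Finset.sum_congr rfl
  intro h _
  have hu := hagree _ (hcard h)
  rw [hβ, hβ'] at hu
  rw [hu]

end
end

section
/- (KKT transfer, forward direction) Let H, C, D be positive integers, Γ = {1,…,C}^H, and let φ: Γ → ℝ^D be any family of vectors. Suppose ŵ⁽¹⁾ ∈ ℝ^{H×C×D} and ŵ⁽²⁾ ∈ ℝ^H satisfy, for all h ∈ {1,…,H} and c ∈ {1,…,C}: ŵ⁽¹⁾_{hc} = ŵ⁽²⁾_h Σ_{γ ∈ Γ: γ_h=c} φ_γ and ŵ⁽²⁾_h = Σ_{c=1}^C ⟨ŵ⁽¹⁾_{hc}, Σ_{γ ∈ Γ: γ_h=c} φ_γ⟩. Define ζ_h := ŵ⁽²⁾_h ŵ⁽¹⁾_h ∈ ℝ^{C×D}. Then for all h and c: ζ_{hc} = ‖ζ_h‖₂ Σ_{γ ∈ Γ: γ_h=c} φ_γ. -/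
open Finset RealInnerProductSpace

noncomputable section

/-- **KKT transfer, forward direction.** If `(ŵ⁽¹⁾, ŵ⁽²⁾)` satisfy the weight-space KKT
equations for support-vector sums `φ`, then `ζ_h = ŵ⁽²⁾_h • ŵ⁽¹⁾_h` satisfies the
predictor-space KKT equation `ζ_{hc} = ‖ζ_h‖₂ Σ_{γ : γ_h = c} φ_γ`. -/
theorem gln_kkt_transfer_forward
    (H C D : ℕ) (hH : 0 < H) (hC : 0 < C) (hD : 0 < D)
    (φ : (Fin H → Fin C) → EuclideanSpace ℝ (Fin D))
    (w1 : Fin H → Fin C → EuclideanSpace ℝ (Fin D)) (w2 : Fin H → ℝ)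
    (hw1 : ∀ h c, w1 h c =
      w2 h • ∑ γ ∈ Finset.univ.filter (fun γ : Fin H → Fin C => γ h = c), φ γ)
    (hw2 : ∀ h, w2 h = ∑ c,
      ⟪w1 h c, ∑ γ ∈ Finset.univ.filter (fun γ : Fin H → Fin C => γ h = c), φ γ⟫)
    (ζ : Fin H → Fin C → EuclideanSpace ℝ (Fin D))
    (hζ : ∀ h c, ζ h c = w2 h • w1 h c) :
    ∀ h c, ζ h c = Real.sqrt (∑ c', ‖ζ h c'‖ ^ 2) •
      ∑ γ ∈ Finset.univ.filter (fun γ : Fin H → Fin C => γ h = c), φ γ := by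
  intro h c
  set Φ : Fin C → EuclideanSpace ℝ (Fin D) := fun c =>
    ∑ γ ∈ Finset.univ.filter (fun γ : Fin H → Fin C => γ h = c), φ γ with hΦ
  have hz : ∀ c', ζ h c' = (w2 h ^ 2) • Φ c' := by
    intro c'
    rw [hζ, hw1, smul_smul, ← sq]
  have hsum : ∑ c', ‖ζ h c'‖ ^ 2 = (w2 h ^ 2) ^ 2 * ∑ c', ‖Φ c'‖ ^ 2 := by
    rw [Finset.mul_sum]
    refine Finset.sum_congr rfl fun c' _ => ?_
    rw [hz, norm_smul, mul_pow, norm_pow, Real.norm_eq_abs, sq_abs]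
  rcases eq_or_ne (w2 h) 0 with h0 | h0
  · have : ∀ c', ζ h c' = 0 := fun c' => by rw [hz, h0]; simp
    rw [this c]
    rw [show (∑ c', ‖ζ h c'‖ ^ 2) = 0 by
      simp only [this, norm_zero]; simp]
    simp
  · have hS0 : ∑ c' : Fin C, ⟪Φ c', Φ c'⟫ = (1 : ℝ) := by
      have h1 := hw2 h
      simp only [hw1, real_inner_smul_left, ← Finset.mul_sum] at h1
      exact mul_left_cancel₀ h0 (by rw [mul_one]; exact h1.symm)
    have hS : ∑ c' : Fin C, ‖Φ c'‖ ^ 2 = 1 := by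
      simp only [real_inner_self_eq_norm_sq] at hS0; exact hS0
    rw [hz, hsum, hS, mul_one, Real.sqrt_sq (sq_nonneg _)]

end
end

section
/- (GLN norm formula for H = C = 2) Let β₁₁, β₁₂, β₂₁ ∈ ℝ^D and β₂₂ := β₁₂ + β₂₁ − β₁₁. Define M as the infimum of √(‖ζ₁₁‖₂² + ‖ζ₁₂‖₂²) + √(‖ζ₂₁‖₂² + ‖ζ₂₂‖₂²) over all ζ₁₁, ζ₁₂, ζ₂₁, ζ₂₂ ∈ ℝ^D satisfying β_{ij} = ζ_{1i} + ζ_{2j} for all i, j ∈ {1,2}. Then the infimum is attained and 2M² = (‖β₁₁ − β₁₂‖₂ + ‖β₁₁ − β₂₁‖₂)² + ‖β₁₂ + β₂₁‖₂². -/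
noncomputable section

private lemma mink2 (p q r s : ℝ) (hp : 0 ≤ p) (hq : 0 ≤ q) (hr : 0 ≤ r) (hs : 0 ≤ s) :
    Real.sqrt (((p + r) ^ 2 + (q + s) ^ 2) / 2) ≤
      Real.sqrt ((p ^ 2 + q ^ 2) / 2) + Real.sqrt ((r ^ 2 + s ^ 2) / 2) := by
  set A := Real.sqrt ((p ^ 2 + q ^ 2) / 2) with hA
  set B := Real.sqrt ((r ^ 2 + s ^ 2) / 2) with hB
  have hA0 : 0 ≤ A := Real.sqrt_nonneg _
  have hB0 : 0 ≤ B := Real.sqrt_nonneg _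
  have hA2 : A ^ 2 = (p ^ 2 + q ^ 2) / 2 := Real.sq_sqrt (by positivity)
  have hB2 : B ^ 2 = (r ^ 2 + s ^ 2) / 2 := Real.sq_sqrt (by positivity)
  have hAB : (p * r + q * s) / 2 ≤ A * B := by
    rw [hA, hB, ← Real.sqrt_mul (by positivity)]
    rw [Real.le_sqrt (by positivity) (by positivity)]
    nlinarith [sq_nonneg (p * s - q * r)]
  have key : ((p + r) ^ 2 + (q + s) ^ 2) / 2 ≤ (A + B) ^ 2 := by nlinarith
  calc Real.sqrt (((p + r) ^ 2 + (q + s) ^ 2) / 2) ≤ Real.sqrt ((A + B) ^ 2) :=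
        Real.sqrt_le_sqrt key
    _ = A + B := Real.sqrt_sq (by positivity)

set_option maxHeartbeats 2000000 in
/-- **GLN norm formula for `H = C = 2`.** The group-lasso infimum over decompositions
`β_{ij} = ζ_{1i} + ζ_{2j}` is attained at some `M` with
`2M² = (‖β₁₁ − β₁₂‖ + ‖β₁₁ − β₂₁‖)² + ‖β₁₂ + β₂₁‖²`. -/
theorem gln_norm_formula_two_two
    (D : ℕ) (β11 β12 β21 β22 : EuclideanSpace ℝ (Fin D))
    (hβ22 : β22 = β12 + β21 - β11) :
    ∃ M : ℝ,
      IsLeast {v : ℝ | ∃ ζ11 ζ12 ζ21 ζ22 : EuclideanSpace ℝ (Fin D),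
          β11 = ζ11 + ζ21 ∧ β12 = ζ11 + ζ22 ∧ β21 = ζ12 + ζ21 ∧ β22 = ζ12 + ζ22 ∧
          v = Real.sqrt (‖ζ11‖ ^ 2 + ‖ζ12‖ ^ 2) + Real.sqrt (‖ζ21‖ ^ 2 + ‖ζ22‖ ^ 2)} M ∧
      2 * M ^ 2 = (‖β11 - β12‖ + ‖β11 - β21‖) ^ 2 + ‖β12 + β21‖ ^ 2 := by
  set a : EuclideanSpace ℝ (Fin D) := β11 - β12 with ha
  set b : EuclideanSpace ℝ (Fin D) := β11 - β21 with hb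
  set c : EuclideanSpace ℝ (Fin D) := β12 + β21 with hc
  set S : ℝ := ‖a‖ + ‖b‖ with hS
  have hS0 : 0 ≤ S := by positivity
  set M : ℝ := Real.sqrt ((S ^ 2 + ‖c‖ ^ 2) / 2) with hM
  refine ⟨M, ⟨?_, ?_⟩, ?_⟩
  · -- membership: exhibit a minimizer
    set t : ℝ := if S = 0 then 1/2 else ‖b‖ / S with ht
    have ht0 : 0 ≤ t := by
      rw [ht]; split_ifs with h
      · norm_num
      · positivity
    have htS : t * S = ‖b‖ := by
      rw [ht]; split_ifs with h
      · have hb0 : ‖b‖ = 0 := by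
          have := norm_nonneg a; have := norm_nonneg b
          simp only [hS] at h; linarith
        rw [h, hb0]; ring
      · field_simp
    have ht1S : (1 - t) * S = ‖a‖ := by
      have h' : (1 - t) * S = S - t * S := by ring
      rw [h', htS, hS]; ring
    have ht1 : 0 ≤ 1 - t := by
      rcases eq_or_lt_of_le hS0 with h | h
      · rw [ht]; simp [← h]; norm_num
      · nlinarith [norm_nonneg a]
    set ζ11 : EuclideanSpace ℝ (Fin D) := (t/2) • c + (1/2 : ℝ) • b with hζ11
    set ζ12 : EuclideanSpace ℝ (Fin D) := ζ11 - b with hζ12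
    set ζ21 : EuclideanSpace ℝ (Fin D) := β11 - ζ11 with hζ21
    set ζ22 : EuclideanSpace ℝ (Fin D) := β11 - ζ11 - a with hζ22
    have hsum1 : ζ11 + ζ12 = t • c := by
      rw [hζ12, hζ11]; module
    have hsum2 : ζ21 + ζ22 = (1 - t) • c := by
      rw [hζ22, hζ21, hζ11, ha, hb, hc]; module
    have hn1 : ‖ζ11‖ ^ 2 + ‖ζ12‖ ^ 2 = ((t * ‖c‖) ^ 2 + ‖b‖ ^ 2) / 2 := by
      have hpar := parallelogram_law_with_norm ℝ ζ11 ζ12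
      have hd : ζ11 - ζ12 = b := by rw [hζ12]; abel
      rw [hsum1, hd] at hpar
      have : ‖t • c‖ = t * ‖c‖ := by
        rw [norm_smul, Real.norm_of_nonneg ht0]
      rw [this] at hpar; linear_combination -hpar / 2
    have hn2 : ‖ζ21‖ ^ 2 + ‖ζ22‖ ^ 2 = (((1 - t) * ‖c‖) ^ 2 + ‖a‖ ^ 2) / 2 := by
      have hpar := parallelogram_law_with_norm ℝ ζ21 ζ22
      have hd : ζ21 - ζ22 = a := by rw [hζ22, hζ21]; abel
      rw [hsum2, hd] at hpar
      have : ‖(1 - t) • c‖ = (1 - t) * ‖c‖ := by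
        rw [norm_smul, Real.norm_of_nonneg ht1]
      rw [this] at hpar; linear_combination -hpar / 2
    refine ⟨ζ11, ζ12, ζ21, ζ22, by rw [hζ21]; abel, ?_, ?_, ?_, ?_⟩
    · rw [hζ22, ha]; abel
    · rw [hζ12, hζ21, hb]; abel
    · rw [hζ12, hζ22, hβ22, hc, ha, hb]; abel
    · rw [hn1, hn2, ← htS, ← ht1S]
      have h1 : ((t * ‖c‖) ^ 2 + (t * S) ^ 2) / 2 = t ^ 2 * ((S ^ 2 + ‖c‖ ^ 2) / 2) := by ring
      have h2 : (((1 - t) * ‖c‖) ^ 2 + ((1 - t) * S) ^ 2) / 2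
          = (1 - t) ^ 2 * ((S ^ 2 + ‖c‖ ^ 2) / 2) := by ring
      rw [h1, h2, Real.sqrt_mul (by positivity), Real.sqrt_mul (by positivity),
        Real.sqrt_sq ht0, Real.sqrt_sq ht1, hM]
      ring
  · -- lower bound
    rintro v ⟨ζ11, ζ12, ζ21, ζ22, h1, h2, h3, h4, hv⟩
    have hbz : b = ζ11 - ζ12 := by rw [hb, h1, h3]; abel
    have haz : a = ζ21 - ζ22 := by rw [ha, h1, h2]; abel
    have hcz : c = (ζ11 + ζ12) + (ζ21 + ζ22) := by rw [hc, h2, h3]; abel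
    set P : ℝ := ‖ζ11 + ζ12‖ with hP
    set Q : ℝ := ‖ζ21 + ζ22‖ with hQ
    have hn1 : ‖ζ11‖ ^ 2 + ‖ζ12‖ ^ 2 = (P ^ 2 + ‖b‖ ^ 2) / 2 := by
      have hpar := parallelogram_law_with_norm ℝ ζ11 ζ12
      rw [← hbz] at hpar; rw [hP]; linear_combination -hpar / 2
    have hn2 : ‖ζ21‖ ^ 2 + ‖ζ22‖ ^ 2 = (Q ^ 2 + ‖a‖ ^ 2) / 2 := by
      have hpar := parallelogram_law_with_norm ℝ ζ21 ζ22
      rw [← haz] at hpar; rw [hQ]; linear_combination -hpar / 2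
    have hPQ : ‖c‖ ≤ P + Q := by rw [hcz]; exact norm_add_le _ _
    have step1 : Real.sqrt (((P + Q) ^ 2 + (‖b‖ + ‖a‖) ^ 2) / 2) ≤ v := by
      rw [hv, hn1, hn2]
      exact mink2 P ‖b‖ Q ‖a‖ (norm_nonneg _) (norm_nonneg _) (norm_nonneg _) (norm_nonneg _)
    have step2 : M ≤ Real.sqrt (((P + Q) ^ 2 + (‖b‖ + ‖a‖) ^ 2) / 2) := by
      rw [hM]
      apply Real.sqrt_le_sqrt
      have : S = ‖b‖ + ‖a‖ := by rw [hS]; ring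
      rw [this]
      have h1 : ‖c‖ ^ 2 ≤ (P + Q) ^ 2 := by
        apply pow_le_pow_left₀ (norm_nonneg _) hPQ 2
      linarith
    linarith
  · -- the value of 2M²
    have : M ^ 2 = (S ^ 2 + ‖c‖ ^ 2) / 2 := Real.sq_sqrt (by positivity)
    rw [this, hS, ha, hb, hc]; ring

end
end

section
/- (Equivalence of the two GLN norm expressions for H = C = 2) Let β₁₁, β₁₂, β₂₁ ∈ ℝ^D and β₂₂ := β₁₂ + β₂₁ − β₁₁. Then (‖β₁₁ − β₁₂‖₂ + ‖β₁₁ − β₂₁‖₂)² + ‖β₁₂ + β₂₁‖₂² = Σ_{i,j ∈ {1,2}} ‖β_{ij}‖₂² + (1/2) Σ_{i,j ∈ {1,2}} ‖β_{ij} − β_{īj}‖₂ · ‖β_{ij} − β_{ij̄}‖₂, where ī := 3 − i and j̄ := 3 − j. -/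
noncomputable section

/-- **Equivalence of the two GLN norm expressions for `H = C = 2`.** Under the equivariance
constraint `β₂₂ = β₁₂ + β₂₁ − β₁₁`,
`(‖β₁₁ − β₁₂‖ + ‖β₁₁ − β₂₁‖)² + ‖β₁₂ + β₂₁‖²
  = Σ_{ij} ‖β_{ij}‖² + ½ Σ_{ij} ‖β_{ij} − β_{īj}‖·‖β_{ij} − β_{ij̄}‖`. -/
theorem gln_norm_expressions_equivalent
    (D : ℕ) (β11 β12 β21 β22 : EuclideanSpace ℝ (Fin D))
    (hβ22 : β22 = β12 + β21 - β11) :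
    (‖β11 - β12‖ + ‖β11 - β21‖) ^ 2 + ‖β12 + β21‖ ^ 2 =
      (‖β11‖ ^ 2 + ‖β12‖ ^ 2 + ‖β21‖ ^ 2 + ‖β22‖ ^ 2) +
      (1 / 2) * (‖β11 - β21‖ * ‖β11 - β12‖ + ‖β12 - β22‖ * ‖β12 - β11‖ +
        ‖β21 - β11‖ * ‖β21 - β22‖ + ‖β22 - β12‖ * ‖β22 - β21‖) := by
  subst hβ22
  have e1 : β12 - (β12 + β21 - β11) = β11 - β21 := by abel
  have e2 : β12 + β21 - β11 - β12 = -(β11 - β21) := by abel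
  have e3 : β12 + β21 - β11 - β21 = -(β11 - β12) := by abel
  have e4 : β21 - (β12 + β21 - β11) = β11 - β12 := by abel
  rw [e1, e2, e3, e4, norm_neg, norm_neg, norm_sub_rev β12 β11, norm_sub_rev β21 β11]
  have key : ‖β11 - β12‖ ^ 2 + ‖β11 - β21‖ ^ 2 + ‖β12 + β21‖ ^ 2 =
      ‖β11‖ ^ 2 + ‖β12‖ ^ 2 + ‖β21‖ ^ 2 + ‖β12 + β21 - β11‖ ^ 2 := by
    have h : β12 + β21 - β11 = (β12 + β21) - β11 := by abel
    rw [h, norm_sub_sq_real, norm_sub_sq_real, norm_sub_sq_real, norm_add_sq_real]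
    rw [inner_add_left, real_inner_comm β12 β11, real_inner_comm β21 β11]
    ring
  nlinarith [key, norm_nonneg (β11 - β12), norm_nonneg (β11 - β21)]

end
end

section
/- (Gradient direction reduction to the exponential loss) Let ℓ be an exponential-like loss with tail constants c, a, μ₊, μ₋, u₊, u₋, and let (x⁽ⁿ⁾, y⁽ⁿ⁾), n = 1,…,N, be a dataset in ℝ^D × {−1,1}. For β ∈ ℝ^D define L(β) = Σ_n ℓ(y⁽ⁿ⁾⟨β, x⁽ⁿ⁾⟩) and L̃(β) = Σ_n c·exp(−a y⁽ⁿ⁾⟨β, x⁽ⁿ⁾⟩). Let (β⁽ᵗ⁾) be a sequence such that m_n⁽ᵗ⁾ := y⁽ⁿ⁾⟨β⁽ᵗ⁾, x⁽ⁿ⁾⟩ → ∞ for every n, and suppose there exists ε > 0 such that for all sufficiently large t, ‖∇L̃(β⁽ᵗ⁾)‖₂ ≥ ε Σ_n c·exp(−a m_n⁽ᵗ⁾)‖x⁽ⁿ⁾‖₂. Then ‖∇L(β⁽ᵗ⁾)/‖∇L(β⁽ᵗ⁾)‖₂ − ∇L̃(β⁽ᵗ⁾)/‖∇L̃(β⁽ᵗ⁾)‖₂‖₂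 → 0; in particular, −∇L(β⁽ᵗ⁾)/‖∇L(β⁽ᵗ⁾)‖₂ converges to a vector ẑ if and only if −∇L̃(β⁽ᵗ⁾)/‖∇L̃(β⁽ᵗ⁾)‖₂ converges to ẑ. -/
open Filter Finset RealInnerProductSpace

noncomputable section

section Aux

open InnerProductSpace

variable {E : Type*} [NormedAddCommGroup E] [InnerProductSpace ℝ E] [CompleteSpace E]

lemma hasGradientAt_comp_inner' (φ : ℝ → ℝ) (d : ℝ) (w β₀ : E)
    (hφ : HasDerivAt φ d ⟪β₀, w⟫) :
    HasGradientAt (fun β => φ ⟪β, w⟫) (d • w) β₀ := by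
  have heq : (fun β : E => ⟪β, w⟫) = fun β : E => ⟪w, β⟫ :=
    funext fun β => real_inner_comm w β
  have h1 : HasFDerivAt (fun β : E => ⟪β, w⟫) (innerSL ℝ w) β₀ := by
    rw [heq]; exact (innerSL ℝ w).hasFDerivAt
  have h2 := hφ.comp_hasFDerivAt β₀ h1
  rw [hasGradientAt_iff_hasFDerivAt]
  convert h2 using 1
  · rfl
  · rfl
  ext z
  simp [toDual_apply_apply, real_inner_smul_left, real_inner_comm, mul_comm]

lemma hasGradientAt_finsum' {ι : Type*} (s : Finset ι) (f : ι → E → ℝ) (g : ι → E) (β₀ : E)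
    (h : ∀ i ∈ s, HasGradientAt (f i) (g i) β₀) :
    HasGradientAt (fun β => ∑ i ∈ s, f i β) (∑ i ∈ s, g i) β₀ := by
  rw [hasGradientAt_iff_hasFDerivAt, map_sum]
  exact HasFDerivAt.fun_sum fun i hi => (h i hi)

lemma normalize_dist_le' (u v : E) (hu : u ≠ 0) (hv : v ≠ 0) :
    ‖‖u‖⁻¹ • u - ‖v‖⁻¹ • v‖ ≤ 2 * ‖u - v‖ / ‖v‖ := by
  have hA : (0:ℝ) < ‖u‖ := norm_pos_iff.mpr hu
  have hB : (0:ℝ) < ‖v‖ := norm_pos_iff.mpr hv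
  have key : ‖u‖⁻¹ • u - ‖v‖⁻¹ • v = ‖v‖⁻¹ • (u - v) + (‖u‖⁻¹ - ‖v‖⁻¹) • u := by
    rw [smul_sub, sub_smul]; abel
  rw [key]
  refine le_trans (norm_add_le _ _) ?_
  rw [norm_smul, norm_smul, Real.norm_eq_abs, Real.norm_eq_abs,
    abs_of_pos (inv_pos.mpr hB)]
  have habs : |‖v‖ - ‖u‖| ≤ ‖u - v‖ := by
    rw [abs_sub_comm]; exact abs_norm_sub_norm_le u v
  have h2 : |‖u‖⁻¹ - ‖v‖⁻¹| * ‖u‖ ≤ ‖u - v‖ / ‖v‖ := by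
    have hrw : ‖u‖⁻¹ - ‖v‖⁻¹ = (‖v‖ - ‖u‖) / (‖u‖ * ‖v‖) := by field_simp
    rw [hrw, abs_div, abs_of_pos (mul_pos hA hB)]
    calc |‖v‖ - ‖u‖| / (‖u‖ * ‖v‖) * ‖u‖ = |‖v‖ - ‖u‖| / ‖v‖ := by
          field_simp
      _ ≤ ‖u - v‖ / ‖v‖ := by gcongr
  have h1 : ‖v‖⁻¹ * ‖u - v‖ = ‖u - v‖ / ‖v‖ := by rw [div_eq_mul_inv]; ring
  rw [h1]
  have : ‖u - v‖ / ‖v‖ + ‖u - v‖ / ‖v‖ = 2 * ‖u - v‖ / ‖v‖ := by ring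
  linarith [h2]

end Aux


/-- A loss `l : ℝ → ℝ` is *exponential-like with tail constants* `c a μp μm up um` if it is
monotonically decreasing, differentiable, tends to `0` at `+∞`, has a Lipschitz derivative,
the constants are positive, and `-l'` has a tight exponential tail with these constants. -/
def IsExpLikeWith (l : ℝ → ℝ) (c a μp μm up um : ℝ) : Prop :=
  Antitone l ∧ Differentiable ℝ l ∧ Tendsto l atTop (nhds 0) ∧
  (∃ K : NNReal, LipschitzWith K (deriv l)) ∧
  0 < c ∧ 0 < a ∧ 0 < μp ∧ 0 < μm ∧ 0 < up ∧ 0 < um ∧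
  (∀ u, up < u → -deriv l u ≤ c * (1 + Real.exp (-μp * u)) * Real.exp (-a * u)) ∧
  (∀ u, um < u → c * (1 - Real.exp (-μm * u)) * Real.exp (-a * u) ≤ -deriv l u)

set_option maxHeartbeats 1000000 in
/-- **Gradient direction reduction to the exponential loss.** If all margins diverge and the
exponential-loss gradient is not degenerate (bounded below by `ε` times the natural scale),
then the normalized gradients of the exponential-like loss and of the exponential loss
become asymptotically equal; in particular, one converges in direction iff the other does,
and to the same limit. -/
theorem gradient_direction_reduction
    (D N : ℕ)
    (l : ℝ → ℝ) (c a μp μm up um : ℝ) (hl : IsExpLikeWith l c a μp μm up um)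
    (x : Fin N → EuclideanSpace ℝ (Fin D)) (y : Fin N → ℝ)
    (hy : ∀ n, y n = 1 ∨ y n = -1)
    (L Ltil : EuclideanSpace ℝ (Fin D) → ℝ)
    (hL : ∀ β, L β = ∑ n, l (y n * ⟪β, x n⟫))
    (hLtil : ∀ β, Ltil β = ∑ n, c * Real.exp (-a * (y n * ⟪β, x n⟫)))
    (β : ℕ → EuclideanSpace ℝ (Fin D))
    (hmargins : ∀ n, Tendsto (fun t => y n * ⟪β t, x n⟫) atTop atTop)
    (hnondeg : ∃ ε : ℝ, 0 < ε ∧ ∀ᶠ t in atTop,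
      ε * ∑ n, c * Real.exp (-a * (y n * ⟪β t, x n⟫)) * ‖x n‖ ≤
        ‖gradient Ltil (β t)‖) :
    Tendsto (fun t =>
        ‖gradient L (β t)‖⁻¹ • gradient L (β t) -
        ‖gradient Ltil (β t)‖⁻¹ • gradient Ltil (β t)) atTop (nhds 0) ∧
    ∀ zhat : EuclideanSpace ℝ (Fin D),
      Tendsto (fun t => ‖gradient L (β t)‖⁻¹ • (-gradient L (β t))) atTop (nhds zhat) ↔
      Tendsto (fun t => ‖gradient Ltil (β t)‖⁻¹ • (-gradient Ltil (β t))) atTop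
        (nhds zhat) := by
  obtain ⟨hmono, hdiff, hlim, hlip, hc, ha, hμp, hμm, hup, hum, htailU, htailL⟩ := hl
  -- gradient formulas
  have hgradL : ∀ γ : EuclideanSpace ℝ (Fin D),
      gradient L γ = ∑ n, ((deriv l (y n * ⟪γ, x n⟫)) * y n) • x n := by
    intro γ
    have hLfun : L = fun β => ∑ n, l (y n * ⟪β, x n⟫) := funext hL
    rw [hLfun]
    refine HasGradientAt.gradient ?_
    refine hasGradientAt_finsum' _ _ _ _ fun n _ => ?_
    have hd : HasDerivAt (fun s => l (y n * s)) (deriv l (y n * ⟪γ, x n⟫) * y n) ⟪γ, x n⟫ := by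
      have h1 : HasDerivAt (fun s : ℝ => y n * s) (y n) ⟪γ, x n⟫ := by
        simpa using (hasDerivAt_id (⟪γ, x n⟫ : ℝ)).const_mul (y n)
      exact (hdiff (y n * ⟪γ, x n⟫)).hasDerivAt.comp _ h1
    exact hasGradientAt_comp_inner' _ _ _ _ hd
  have hgradT : ∀ γ : EuclideanSpace ℝ (Fin D),
      gradient Ltil γ = ∑ n, ((-a) * (c * Real.exp (-a * (y n * ⟪γ, x n⟫)) * y n)) • x n := by
    intro γ
    have hfun : Ltil = fun β => ∑ n, c * Real.exp (-a * (y n * ⟪β, x n⟫)) := funext hLtil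
    rw [hfun]
    refine HasGradientAt.gradient ?_
    refine hasGradientAt_finsum' _ _ _ _ fun n _ => ?_
    have hd : HasDerivAt (fun s => c * Real.exp (-a * (y n * s)))
        ((-a) * (c * Real.exp (-a * (y n * ⟪γ, x n⟫)) * y n)) ⟪γ, x n⟫ := by
      have h1 : HasDerivAt (fun s : ℝ => -a * (y n * s)) (-a * y n) ⟪γ, x n⟫ := by
        have := (hasDerivAt_id (⟪γ, x n⟫ : ℝ)).const_mul (-a * y n)
        simpa [mul_assoc] using this
      have h2 := (h1.exp).const_mul c
      convert h2 using 1
      · rfl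
      · rfl
      ring
    exact hasGradientAt_comp_inner' _ _ _ _ hd
  -- the two auxiliary vector sequences
  set u : ℕ → EuclideanSpace ℝ (Fin D) :=
    fun t => ∑ n, ((-deriv l (y n * ⟪β t, x n⟫)) * y n) • x n with hudef
  set v : ℕ → EuclideanSpace ℝ (Fin D) :=
    fun t => ∑ n, (c * Real.exp (-a * (y n * ⟪β t, x n⟫)) * y n) • x n with hvdef
  have hgLu : ∀ t, gradient L (β t) = -u t := by
    intro t
    rw [hgradL (β t), hudef]
    rw [← Finset.sum_neg_distrib]
    refine Finset.sum_congr rfl fun n _ => ?_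
    rw [← neg_smul]
    ring_nf
  have hgTv : ∀ t, gradient Ltil (β t) = (-a) • v t := by
    intro t
    rw [hgradT (β t), hvdef, Finset.smul_sum]
    refine Finset.sum_congr rfl fun n _ => ?_
    rw [smul_smul]
  have hnormL : ∀ t, ‖gradient L (β t)‖ = ‖u t‖ := fun t => by rw [hgLu t, norm_neg]
  have hnormT : ∀ t, ‖gradient Ltil (β t)‖ = a * ‖v t‖ := fun t => by
    rw [hgTv t, norm_smul, Real.norm_eq_abs, abs_neg, abs_of_pos ha]
  set F : ℕ → EuclideanSpace ℝ (Fin D) := fun t => ‖u t‖⁻¹ • u t with hFdef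
  set G : ℕ → EuclideanSpace ℝ (Fin D) := fun t => ‖v t‖⁻¹ • v t with hGdef
  have hFeq : ∀ t, ‖gradient L (β t)‖⁻¹ • gradient L (β t) = -(F t) := by
    intro t
    rw [hnormL t, hgLu t, smul_neg, hFdef]
  have hGeq : ∀ t, ‖gradient Ltil (β t)‖⁻¹ • gradient Ltil (β t) = -(G t) := by
    intro t
    rw [hnormT t, hgTv t, smul_smul, hGdef]
    have hcoef : (a * ‖v t‖)⁻¹ * (-a) = -(‖v t‖⁻¹) := by
      rw [mul_inv]
      have h1 : a⁻¹ * ‖v t‖⁻¹ * (-a) = -(a⁻¹ * a) * ‖v t‖⁻¹ := by ring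
      rw [h1, inv_mul_cancel₀ (ne_of_gt ha)]
      ring
    rw [hcoef, neg_smul]
  -- main convergence of F - G
  have htendFG : Tendsto (fun t => F t - G t) atTop (nhds 0) := by
    rcases Nat.eq_zero_or_pos N with hN | hN
    · subst hN
      have hu0 : ∀ t, u t = 0 := fun t => by rw [hudef]; simp
      have hv0 : ∀ t, v t = 0 := fun t => by rw [hvdef]; simp
      have : (fun t => F t - G t) = fun _ : ℕ => (0 : EuclideanSpace ℝ (Fin D)) := by
        funext t
        simp only [hFdef, hGdef]
        rw [hu0 t, hv0 t]
        simp
      rw [this]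
      exact tendsto_const_nhds
    · -- N positive
      obtain ⟨ε, hε, hev⟩ := hnondeg
      have hx : ∀ n, x n ≠ 0 := by
        intro n hxn
        obtain ⟨t, ht⟩ := ((hmargins n).eventually_gt_atTop 0).exists
        rw [hxn] at ht
        simp at ht
      have hSpos : ∀ t : ℕ, 0 < ∑ n, c * Real.exp (-a * (y n * ⟪β t, x n⟫)) * ‖x n‖ := by
        intro t
        have hNe : (Finset.univ : Finset (Fin N)).Nonempty := by
          have : Nonempty (Fin N) := ⟨⟨0, hN⟩⟩
          exact Finset.univ_nonempty
        refine Finset.sum_pos (fun n _ => ?_) hNe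
        have h := norm_pos_iff.mpr (hx n)
        positivity
      have hev' : ∀ᶠ t in atTop,
          ε * ∑ n, c * Real.exp (-a * (y n * ⟪β t, x n⟫)) * ‖x n‖ ≤ a * ‖v t‖ := by
        filter_upwards [hev] with t h
        rw [← hnormT t]
        exact h
      set μ := min μp μm with hμdef
      have hμ : 0 < μ := lt_min hμp hμm
      have hkey : ∀ η : ℝ, 0 < η → ∀ᶠ t in atTop, ‖u t - v t‖ ≤ η * ‖v t‖ := by
        intro η hη
        have hexp0 : Tendsto (fun R : ℝ => Real.exp (-μ * R) * (a / ε)) atTop (nhds 0) := by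
          have h1 : Tendsto (fun R : ℝ => -μ * R) atTop atBot :=
            (tendsto_const_mul_atBot_of_neg (by linarith)).mpr tendsto_id
          have h2 := Real.tendsto_exp_atBot.comp h1
          simpa using h2.mul_const (a / ε)
        obtain ⟨R, hR1, hR2⟩ := ((eventually_gt_atTop (max up um)).and
          (hexp0.eventually_le_const hη)).exists
        have hRpos : 0 < R := lt_trans (lt_of_lt_of_le hup (le_max_left _ _)) hR1
        have hmev : ∀ᶠ t in atTop, ∀ n, R ≤ y n * ⟪β t, x n⟫ :=
          eventually_all.mpr fun n => (hmargins n).eventually_ge_atTop R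
        filter_upwards [hmev, hev'] with t hmt hvt
        have hterm : ∀ n : Fin N,
            |(-deriv l (y n * ⟪β t, x n⟫)) - c * Real.exp (-a * (y n * ⟪β t, x n⟫))|
            ≤ c * Real.exp (-a * (y n * ⟪β t, x n⟫)) * Real.exp (-μ * R) := by
          intro n
          set w := y n * ⟪β t, x n⟫
          have hmn : R ≤ w := hmt n
          have h1 : max up um < w := lt_of_lt_of_le hR1 hmn
          have hU := htailU w (lt_of_le_of_lt (le_max_left _ _) h1)
          have hL' := htailL w (lt_of_le_of_lt (le_max_right _ _) h1)
          have hwpos : 0 < w := lt_of_lt_of_le hRpos hmn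
          have he1 : Real.exp (-μp * w) ≤ Real.exp (-μ * R) := by
            apply Real.exp_le_exp.mpr
            have hle : μ ≤ μp := min_le_left _ _
            nlinarith [mul_nonneg (sub_nonneg.mpr hle) hwpos.le,
              mul_nonneg hμ.le (sub_nonneg.mpr hmn)]
          have he2 : Real.exp (-μm * w) ≤ Real.exp (-μ * R) := by
            apply Real.exp_le_exp.mpr
            have hle : μ ≤ μm := min_le_right _ _
            nlinarith [mul_nonneg (sub_nonneg.mpr hle) hwpos.le,
              mul_nonneg hμ.le (sub_nonneg.mpr hmn)]
          have hepos : 0 < Real.exp (-a * w) := Real.exp_pos _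
          have hq1 : c * Real.exp (-a * w) * Real.exp (-μp * w) ≤
              c * Real.exp (-a * w) * Real.exp (-μ * R) :=
            mul_le_mul_of_nonneg_left he1 (by positivity)
          have hq2 : c * Real.exp (-a * w) * Real.exp (-μm * w) ≤
              c * Real.exp (-a * w) * Real.exp (-μ * R) :=
            mul_le_mul_of_nonneg_left he2 (by positivity)
          rw [abs_le]
          refine ⟨by nlinarith [hL', hq2], by nlinarith [hU, hq1]⟩
        have hsum : ‖u t - v t‖ ≤
            ∑ n, |(-deriv l (y n * ⟪β t, x n⟫)) - c * Real.exp (-a * (y n * ⟪β t, x n⟫))| * ‖x n‖ := by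
          have huv : u t - v t = ∑ n,
              (((-deriv l (y n * ⟪β t, x n⟫)) - c * Real.exp (-a * (y n * ⟪β t, x n⟫))) * y n) • x n := by
            simp only [hudef, hvdef]
            rw [← Finset.sum_sub_distrib]
            refine Finset.sum_congr rfl fun n _ => ?_
            rw [← sub_smul]
            ring_nf
          rw [huv]
          refine le_trans (norm_sum_le _ _) (Finset.sum_le_sum fun n _ => ?_)
          rw [norm_smul, Real.norm_eq_abs, abs_mul]
          have hy1 : |y n| = 1 := by rcases hy n with h | h <;> simp [h]
          rw [hy1, mul_one]
        have hstep2 : ∑ n, |(-deriv l (y n * ⟪β t, x n⟫)) - c * Real.exp (-a * (y n * ⟪β t, x n⟫))| * ‖x n‖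
            ≤ Real.exp (-μ * R) * ∑ n, c * Real.exp (-a * (y n * ⟪β t, x n⟫)) * ‖x n‖ := by
          rw [Finset.mul_sum]
          refine Finset.sum_le_sum fun n _ => ?_
          have h0 : (0:ℝ) ≤ ‖x n‖ := norm_nonneg _
          exact le_trans (mul_le_mul_of_nonneg_right (hterm n) h0) (le_of_eq (by ring))
        have hstep3 : Real.exp (-μ * R) * ∑ n, c * Real.exp (-a * (y n * ⟪β t, x n⟫)) * ‖x n‖
            ≤ Real.exp (-μ * R) * ((a / ε) * ‖v t‖) := by
          have hexpnn : (0:ℝ) ≤ Real.exp (-μ * R) := le_of_lt (Real.exp_pos _)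
          have hSle : ∑ n, c * Real.exp (-a * (y n * ⟪β t, x n⟫)) * ‖x n‖ ≤ (a / ε) * ‖v t‖ := by
            rw [div_mul_eq_mul_div, le_div_iff₀ hε, mul_comm]
            exact hvt
          exact mul_le_mul_of_nonneg_left hSle hexpnn
        calc ‖u t - v t‖ ≤ _ := hsum
          _ ≤ _ := hstep2
          _ ≤ _ := hstep3
          _ = (Real.exp (-μ * R) * (a / ε)) * ‖v t‖ := by ring
          _ ≤ η * ‖v t‖ := mul_le_mul_of_nonneg_right hR2 (norm_nonneg _)
      have hvpos : ∀ᶠ t in atTop, 0 < ‖v t‖ := by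
        filter_upwards [hev'] with t h
        nlinarith [mul_pos hε (hSpos t), norm_nonneg (v t)]
      rw [NormedAddCommGroup.tendsto_nhds_zero]
      intro η' hη'
      have hmin : (0:ℝ) < min (η' / 3) (1 / 2) := lt_min (by linarith) one_half_pos
      filter_upwards [hkey _ hmin, hvpos] with t h1 h2
      have hvne : v t ≠ 0 := by
        intro h0; rw [h0, norm_zero] at h2; exact lt_irrefl _ h2
      have hune : u t ≠ 0 := by
        intro h0
        rw [h0, zero_sub, norm_neg] at h1
        have hm2 := min_le_right (η' / 3) (1/2 : ℝ)
        nlinarith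
      have hd := normalize_dist_le' (u t) (v t) hune hvne
      simp only [hFdef, hGdef]
      calc ‖‖u t‖⁻¹ • u t - ‖v t‖⁻¹ • v t‖ ≤ 2 * ‖u t - v t‖ / ‖v t‖ := hd
        _ ≤ 2 * (min (η'/3) (1/2) * ‖v t‖) / ‖v t‖ := by gcongr
        _ = 2 * min (η'/3) (1/2) := by field_simp
        _ < η' := by
            have hm1 := min_le_left (η'/3) (1/2 : ℝ)
            linarith
  refine ⟨?_, ?_⟩
  · have heq : (fun t =>
        ‖gradient L (β t)‖⁻¹ • gradient L (β t) -
        ‖gradient Ltil (β t)‖⁻¹ • gradient Ltil (β t)) = fun t => -(F t - G t) := by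
      funext t
      rw [hFeq t, hGeq t]
      abel
    rw [heq]
    simpa using htendFG.neg
  · intro zhat
    have e1 : (fun t => ‖gradient L (β t)‖⁻¹ • (-gradient L (β t))) = F := by
      funext t; rw [smul_neg, hFeq t, neg_neg]
    have e2 : (fun t => ‖gradient Ltil (β t)‖⁻¹ • (-gradient Ltil (β t))) = G := by
      funext t; rw [smul_neg, hGeq t, neg_neg]
    rw [e1, e2]
    constructor
    · intro h
      have hGfun : G = fun t => F t - (F t - G t) := by funext t; abel
      rw [hGfun]
      simpa using h.sub htendFG
    · intro h
      have hFfun : F = fun t => G t + (F t - G t) := by funext t; abel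
      rw [hFfun]
      simpa using h.add htendFG

end
end

section
/- (Equivalence of the weight-space and predictor-space margin problems for two-layer GLNs) Let (x⁽ⁿ⁾, y⁽ⁿ⁾, γ⁽ⁿ⁾), n = 1,…,N, be a dataset with x⁽ⁿ⁾ ∈ ℝ^D, y⁽ⁿ⁾ ∈ {−1,1}, γ⁽ⁿ⁾ ∈ {1,…,C}^H. Then the infimum of ‖w⁽¹⁾‖₂² + ‖w⁽²⁾‖₂² over all w⁽¹⁾ ∈ ℝ^{H×C×D}, w⁽²⁾ ∈ ℝ^H satisfying y⁽ⁿ⁾⟨Σ_{h=1}^H w⁽²⁾_h w⁽¹⁾_{h,γ⁽ⁿ⁾_h}, x⁽ⁿ⁾⟩ ≥ 1 for all n equals the infimum of 2 Σ_{h=1}^H ‖ζ_h‖₂ over all ζ ∈ ℝ^{H×C×D} satisfying y⁽ⁿ⁾⟨Σ_{h=1}^H ζ_{h,γ⁽ⁿ⁾_h}, x⁽ⁿ⁾⟩ ≥ 1 for all n (with both infima equal to +∞ if the constraints are infeasible). -/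
open Finset RealInnerProductSpace
open scoped ENNReal

noncomputable section

/-- **Equivalence of the weight-space and predictor-space margin problems for two-layer
GLNs.** The infimum of `‖w⁽¹⁾‖₂² + ‖w⁽²⁾‖₂²` over weights satisfying the margin
constraints equals the infimum of `2 Σ_h ‖ζ_h‖₂` over auxiliary variables satisfying the
margin constraints (both computed in `ℝ≥0∞`, so infeasible problems have value `⊤`). -/
theorem gln_margin_problems_equivalent
    (H C D N : ℕ)
    (x : Fin N → EuclideanSpace ℝ (Fin D)) (y : Fin N → ℝ)
    (hy : ∀ n, y n = 1 ∨ y n = -1) (γd : Fin N → Fin H → Fin C) :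
    sInf {v : ℝ≥0∞ | ∃ (w1 : Fin H → Fin C → EuclideanSpace ℝ (Fin D)) (w2 : Fin H → ℝ),
        (∀ n, 1 ≤ y n * ⟪∑ h, w2 h • w1 h (γd n h), x n⟫) ∧
        v = ENNReal.ofReal ((∑ h, ∑ c, ‖w1 h c‖ ^ 2) + ∑ h, (w2 h) ^ 2)} =
    sInf {v : ℝ≥0∞ | ∃ ζ : Fin H → Fin C → EuclideanSpace ℝ (Fin D),
        (∀ n, 1 ≤ y n * ⟪∑ h, ζ h (γd n h), x n⟫) ∧
        v = ENNReal.ofReal (2 * ∑ h, Real.sqrt (∑ c, ‖ζ h c‖ ^ 2))} := by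
  apply le_antisymm
  · -- weight-space inf ≤ predictor-space inf
    apply le_sInf
    rintro v ⟨ζ, hcon, rfl⟩
    set s : Fin H → ℝ := fun h => Real.sqrt (∑ c, ‖ζ h c‖ ^ 2) with hs_def
    have hs_nonneg : ∀ h, 0 ≤ s h := fun h => Real.sqrt_nonneg _
    have hsq : ∀ h, (s h) ^ 2 = ∑ c, ‖ζ h c‖ ^ 2 := by
      intro h
      exact Real.sq_sqrt (Finset.sum_nonneg fun c _ => sq_nonneg _)
    set w2 : Fin H → ℝ := fun h => Real.sqrt (s h) with hw2_def
    set w1 : Fin H → Fin C → EuclideanSpace ℝ (Fin D) :=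
      fun h c => (Real.sqrt (s h))⁻¹ • ζ h c with hw1_def
    have hzero : ∀ h, s h = 0 → ∀ c, ζ h c = 0 := by
      intro h hs c
      have hsum : ∑ c, ‖ζ h c‖ ^ 2 = 0 := by
        have := hsq h; rw [hs] at this; simpa using this.symm
      have := (Finset.sum_eq_zero_iff_of_nonneg (fun c _ => sq_nonneg ‖ζ h c‖)).mp hsum
        c (Finset.mem_univ c)
      have : ‖ζ h c‖ = 0 := by
        have := sq_eq_zero_iff.mp this; exact this
      exact norm_eq_zero.mp this
    have key : ∀ h c, w2 h • w1 h c = ζ h c := by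
      intro h c
      simp only [hw1_def, hw2_def, smul_smul]
      rcases eq_or_ne (s h) 0 with hs | hs
      · simp [hzero h hs c]
      · have hpos : 0 < s h := lt_of_le_of_ne (hs_nonneg h) (Ne.symm hs)
        have : Real.sqrt (s h) ≠ 0 := ne_of_gt (Real.sqrt_pos.mpr hpos)
        rw [mul_inv_cancel₀ this, one_smul]
    apply sInf_le
    refine ⟨w1, w2, ?_, ?_⟩
    · intro n
      have : (∑ h, w2 h • w1 h (γd n h)) = ∑ h, ζ h (γd n h) :=
        Finset.sum_congr rfl fun h _ => key h (γd n h)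
      rw [this]; exact hcon n
    · congr 1
      have h1 : ∀ h, ∑ c, ‖w1 h c‖ ^ 2 = s h := by
        intro h
        rcases eq_or_ne (s h) 0 with hs | hs
        · simp [hw1_def, hzero h hs, hs]
        · have hpos : 0 < s h := lt_of_le_of_ne (hs_nonneg h) (Ne.symm hs)
          have hcalc : ∀ c, ‖w1 h c‖ ^ 2 = (s h)⁻¹ * ‖ζ h c‖ ^ 2 := by
            intro c
            simp only [hw1_def, norm_smul, Real.norm_eq_abs, mul_pow, sq_abs]
            rw [inv_pow, Real.sq_sqrt (hs_nonneg h)]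
          rw [Finset.sum_congr rfl fun c _ => hcalc c, ← Finset.mul_sum, ← hsq h]
          field_simp
      have h2 : ∀ h, (w2 h) ^ 2 = s h := fun h => Real.sq_sqrt (hs_nonneg h)
      rw [Finset.sum_congr rfl fun h _ => h1 h, Finset.sum_congr rfl fun h _ => h2 h]
      ring
  · -- predictor-space inf ≤ weight-space inf
    apply le_sInf
    rintro v ⟨w1, w2, hcon, rfl⟩
    refine le_trans (sInf_le ⟨fun h c => w2 h • w1 h c, hcon, rfl⟩) ?_
    apply ENNReal.ofReal_le_ofReal
    have per : ∀ h, 2 * Real.sqrt (∑ c, ‖w2 h • w1 h c‖ ^ 2) ≤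
        (∑ c, ‖w1 h c‖ ^ 2) + (w2 h) ^ 2 := by
      intro h
      have ha : ∀ c, ‖w2 h • w1 h c‖ ^ 2 = (w2 h) ^ 2 * ‖w1 h c‖ ^ 2 := by
        intro c; rw [norm_smul, mul_pow, Real.norm_eq_abs, sq_abs]
      rw [Finset.sum_congr rfl fun c _ => ha c, ← Finset.mul_sum,
        Real.sqrt_mul (sq_nonneg _), Real.sqrt_sq_eq_abs]
      set a := Real.sqrt (∑ c, ‖w1 h c‖ ^ 2) with ha_def
      have haa : a ^ 2 = ∑ c, ‖w1 h c‖ ^ 2 :=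
        Real.sq_sqrt (Finset.sum_nonneg fun c _ => sq_nonneg _)
      calc 2 * (|w2 h| * a) = 2 * |w2 h| * a := by ring
        _ ≤ |w2 h| ^ 2 + a ^ 2 := two_mul_le_add_sq _ _
        _ = (∑ c, ‖w1 h c‖ ^ 2) + (w2 h) ^ 2 := by rw [haa, sq_abs]; ring
    calc 2 * ∑ h, Real.sqrt (∑ c, ‖w2 h • w1 h c‖ ^ 2)
        = ∑ h, 2 * Real.sqrt (∑ c, ‖w2 h • w1 h c‖ ^ 2) := by rw [Finset.mul_sum]
      _ ≤ ∑ h, ((∑ c, ‖w1 h c‖ ^ 2) + (w2 h) ^ 2) :=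
          Finset.sum_le_sum fun h _ => per h
      _ = (∑ h, ∑ c, ‖w1 h c‖ ^ 2) + ∑ h, (w2 h) ^ 2 := Finset.sum_add_distrib

end
end

section
/- (Equivalence of the weight-space and predictor-space margin problems for frozen-gate ReLU networks) Let (x⁽ⁿ⁾, y⁽ⁿ⁾, γ⁽ⁿ⁾), n = 1,…,N, be a dataset with x⁽ⁿ⁾ ∈ ℝ^D, y⁽ⁿ⁾ ∈ {−1,1}, γ⁽ⁿ⁾ ∈ {0,1}^H. Then the infimum of ‖w⁽¹⁾‖₂² + ‖w⁽²⁾‖₂² over all w⁽¹⁾ ∈ ℝ^{H×D}, w⁽²⁾ ∈ ℝ^H satisfying y⁽ⁿ⁾⟨Σ_{h: γ⁽ⁿ⁾_h = 1} w⁽²⁾_h w⁽¹⁾_h, x⁽ⁿ⁾⟩ ≥ 1 for all n equals the infimum of 2 Σ_{h=1}^H ‖ζ_h‖₂ over all ζ ∈ ℝ^{H×D} satisfying y⁽ⁿ⁾⟨Σ_{h: γ⁽ⁿ⁾_h = 1} ζ_h, x⁽ⁿ⁾⟩ ≥ 1 for all n (with both infima equal to +∞ if the constraints are infeasible). -/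
open Finset RealInnerProductSpace
open scoped ENNReal

noncomputable section

/-- **Equivalence of the weight-space and predictor-space margin problems for frozen-gate
ReLU networks.** The infimum of `‖w⁽¹⁾‖₂² + ‖w⁽²⁾‖₂²` over weights satisfying the margin
constraints equals the infimum of the FReLU group-lasso norm `2 Σ_h ‖ζ_h‖₂` over auxiliary
variables satisfying the margin constraints (both computed in `ℝ≥0∞`, so infeasible
problems have value `⊤`). -/
theorem frelu_margin_problems_equivalent
    (H D N : ℕ)
    (x : Fin N → EuclideanSpace ℝ (Fin D)) (y : Fin N → ℝ)
    (hy : ∀ n, y n = 1 ∨ y n = -1) (γd : Fin N → Fin H → Bool) :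
    sInf {v : ℝ≥0∞ | ∃ (w1 : Fin H → EuclideanSpace ℝ (Fin D)) (w2 : Fin H → ℝ),
        (∀ n, 1 ≤ y n *
          ⟪∑ h ∈ Finset.univ.filter (fun h => γd n h = true), w2 h • w1 h, x n⟫) ∧
        v = ENNReal.ofReal ((∑ h, ‖w1 h‖ ^ 2) + ∑ h, (w2 h) ^ 2)} =
    sInf {v : ℝ≥0∞ | ∃ ζ : Fin H → EuclideanSpace ℝ (Fin D),
        (∀ n, 1 ≤ y n *
          ⟪∑ h ∈ Finset.univ.filter (fun h => γd n h = true), ζ h, x n⟫) ∧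
        v = ENNReal.ofReal (2 * ∑ h, ‖ζ h‖)} := by
  apply le_antisymm
  · -- weight-space inf ≤ predictor-space inf
    apply le_sInf
    rintro v ⟨ζ, hc, rfl⟩
    have hsmul : ∀ h, (Real.sqrt ‖ζ h‖) • ((Real.sqrt ‖ζ h‖)⁻¹ • ζ h) = ζ h := by
      intro h
      by_cases hz : ζ h = 0
      · simp [hz]
      · rw [smul_smul, mul_inv_cancel₀
          (ne_of_gt (Real.sqrt_pos.mpr (norm_pos_iff.mpr hz))), one_smul]
    apply sInf_le
    refine ⟨fun h => (Real.sqrt ‖ζ h‖)⁻¹ • ζ h, fun h => Real.sqrt ‖ζ h‖, ?_, ?_⟩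
    · intro n
      simpa only [hsmul] using hc n
    · congr 1
      have e2 : ∀ h : Fin H, (Real.sqrt ‖ζ h‖) ^ 2 = ‖ζ h‖ := fun h =>
        Real.sq_sqrt (norm_nonneg _)
      have e1 : ∀ h : Fin H, ‖(Real.sqrt ‖ζ h‖)⁻¹ • ζ h‖ ^ 2 = ‖ζ h‖ := by
        intro h
        by_cases hz : ζ h = 0
        · simp [hz]
        · have hpos : (0:ℝ) < Real.sqrt ‖ζ h‖ := Real.sqrt_pos.mpr (norm_pos_iff.mpr hz)
          rw [norm_smul, Real.norm_eq_abs, abs_of_pos (inv_pos.mpr hpos), mul_pow,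
            inv_pow, e2, sq, ← mul_assoc, inv_mul_cancel₀ (norm_pos_iff.mpr hz).ne',
            one_mul]
      simp only [e1, e2]
      ring
  · -- predictor-space inf ≤ weight-space inf
    apply le_sInf
    rintro v ⟨w1, w2, hc, rfl⟩
    have key : (2 : ℝ) * ∑ h, ‖w2 h • w1 h‖ ≤ (∑ h, ‖w1 h‖ ^ 2) + ∑ h, (w2 h) ^ 2 := by
      rw [Finset.mul_sum, ← Finset.sum_add_distrib]
      apply Finset.sum_le_sum
      intro h _
      rw [norm_smul, Real.norm_eq_abs]
      nlinarith [abs_nonneg (w2 h), norm_nonneg (w1 h), sq_abs (w2 h),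
        sq_nonneg (‖w1 h‖ - |w2 h|)]
    refine le_trans (sInf_le ?_) (ENNReal.ofReal_le_ofReal key)
    exact ⟨fun h => w2 h • w1 h, hc, rfl⟩

end
end
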